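/- Let α be a unit-speed curve in ℝ³ with curvature κ > 0 and torsion τ ≠ 0, both differentiable, and let λ ≠ 0. Define the vector field d(s) = (t + λn + (1+λ²)(κ/τ)b) / √((1+λ²)²(κ/τ)² + (1+λ²)). If the intrinsic equation τ = (1+λ²)(τ/κ)' / (λ(1 + λ² + (τ/κ)²)) holds, then d'(s) = 0, i.e., d is a constant vector. -/

import Mathlib

/-- if the intrinsic equation `τ = (1+λ²)(τ/κ)'/(λ(1+λ²+(τ/κ)²))`
holds, then the vector field
`d(s) = (T + λN + (1+λ²)(κ/τ)B)/√((1+λ²)²(κ/τ)² + (1+λ²))` has zero derivative,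
i.e. it is constant. -/
theorem whirl_axis_constant
    (I : Set ℝ) (T N B : ℝ → EuclideanSpace ℝ (Fin 3)) (κ τ r' : ℝ → ℝ) (lam : ℝ)
    (hI : IsOpen I)
    (hκ : ∀ s ∈ I, 0 < κ s) (hτ : ∀ s ∈ I, τ s ≠ 0) (hlam : lam ≠ 0)
    (hT : ∀ s ∈ I, HasDerivAt T (κ s • N s) s)
    (hN : ∀ s ∈ I, HasDerivAt N (-(κ s) • T s + τ s • B s) s)
    (hB : ∀ s ∈ I, HasDerivAt B (-(τ s) • N s) s)
    (hratio : ∀ s ∈ I, HasDerivAt (fun u => τ u / κ u) (r' s) s)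
    (hintrinsic : ∀ s ∈ I,
      τ s = (1 + lam ^ 2) * r' s / (lam * (1 + lam ^ 2 + (τ s / κ s) ^ 2))) :
    ∀ s ∈ I, HasDerivAt
      (fun u => (Real.sqrt ((1 + lam ^ 2) ^ 2 * (κ u / τ u) ^ 2 + (1 + lam ^ 2)))⁻¹ •
        (T u + lam • N u + ((1 + lam ^ 2) * (κ u / τ u)) • B u))
      (0 : EuclideanSpace ℝ (Fin 3)) s := by
  intro s hs
  have hk : 0 < κ s := hκ s hs
  have ht : τ s ≠ 0 := hτ s hs
  have hρ : τ s / κ s ≠ 0 := div_ne_zero ht hk.ne'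
  set f' : ℝ := -(r' s) / (τ s / κ s) ^ 2 with hf'
  have hG : HasDerivAt (fun u => κ u / τ u) f' s := by
    have h := (hratio s hs).inv hρ
    rw [show (fun u => τ u / κ u)⁻¹ = (fun u => κ u / τ u) from by funext u; simp [inv_div]] at h
    exact h
  set d1 : ℝ := (1 + lam ^ 2) ^ 2 * (2 * (κ s / τ s) * f') with hd1
  have h1 : HasDerivAt (fun u => (1 + lam ^ 2) ^ 2 * (κ u / τ u) ^ 2 + (1 + lam ^ 2)) d1 s := by
    have := ((hG.pow 2).const_mul ((1 + lam ^ 2) ^ 2)).add_const (1 + lam ^ 2)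
    refine this.congr_deriv ?_
    rw [hd1]; push_cast; ring
  have hinpos : 0 < (1 + lam ^ 2) ^ 2 * (κ s / τ s) ^ 2 + (1 + lam ^ 2) := by positivity
  set g : ℝ := Real.sqrt ((1 + lam ^ 2) ^ 2 * (κ s / τ s) ^ 2 + (1 + lam ^ 2)) with hgdef
  have hgpos : 0 < g := Real.sqrt_pos.mpr hinpos
  have hg2 : g ^ 2 = (1 + lam ^ 2) ^ 2 * (κ s / τ s) ^ 2 + (1 + lam ^ 2) := Real.sq_sqrt hinpos.le
  have hsqrt : HasDerivAt
      (fun u => Real.sqrt ((1 + lam ^ 2) ^ 2 * (κ u / τ u) ^ 2 + (1 + lam ^ 2)))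
      (d1 / (2 * g)) s := h1.sqrt hinpos.ne'
  set i' : ℝ := -(d1 / (2 * g)) / g ^ 2 with hi'
  have hinv : HasDerivAt
      (fun u => (Real.sqrt ((1 + lam ^ 2) ^ 2 * (κ u / τ u) ^ 2 + (1 + lam ^ 2)))⁻¹) i' s :=
    hsqrt.inv hgpos.ne'
  have hV : HasDerivAt (fun u => T u + lam • N u + (((1 + lam ^ 2) * (κ u / τ u)) • B u))
      ((κ s • N s + lam • (-(κ s) • T s + τ s • B s)) +
        (((1 + lam ^ 2) * (κ s / τ s)) • (-(τ s) • N s) + ((1 + lam ^ 2) * f') • B s)) s :=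
    ((hT s hs).add ((hN s hs).const_smul lam)).add
      ((hG.const_mul (1 + lam ^ 2)).smul (hB s hs))
  have hfull := hinv.smul hV
  refine hfull.congr_deriv ?_
  set V' : EuclideanSpace ℝ (Fin 3) :=
    (κ s • N s + lam • (-(κ s) • T s + τ s • B s)) +
      (((1 + lam ^ 2) * (κ s / τ s)) • (-(τ s) • N s) + ((1 + lam ^ 2) * f') • B s) with hV'
  have eq1 : τ s * (lam * ((1 + lam ^ 2) * κ s ^ 2 + τ s ^ 2)) =
      (1 + lam ^ 2) * r' s * κ s ^ 2 := by
    have h := hintrinsic s hs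
    have hden : lam * (1 + lam ^ 2 + (τ s / κ s) ^ 2) ≠ 0 := by
      have : 0 < 1 + lam ^ 2 + (τ s / κ s) ^ 2 := by positivity
      exact mul_ne_zero hlam this.ne'
    field_simp at h
    linarith [h]
  have hg2' : τ s ^ 2 * g ^ 2 =
      (1 + lam ^ 2) ^ 2 * κ s ^ 2 + (1 + lam ^ 2) * τ s ^ 2 := by
    rw [hg2]; field_simp
  have hgne := hgpos.ne'
  have cT0 : g⁻¹ * (lam * (-(κ s))) + i' = 0 := by
    rw [hi', hd1, hf']
    field_simp
    linear_combination (-(κ s * lam * τ s)) * hg2' +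
      (-(κ s * (1 + lam ^ 2))) * eq1
  have cN0 : g⁻¹ * (κ s + ((1 + lam ^ 2) * (κ s / τ s)) * (-(τ s))) + i' * lam = 0 := by
    rw [hi', hd1, hf']
    field_simp
    linear_combination (-(κ s * lam ^ 2 * τ s)) * hg2' +
      (-(κ s * (1 + lam ^ 2) * lam)) * eq1
  have cB0 : g⁻¹ * (lam * τ s + (1 + lam ^ 2) * f') + i' * ((1 + lam ^ 2) * (κ s / τ s)) = 0 := by
    rw [hi', hd1, hf']
    field_simp
    linear_combination (lam * τ s ^ 3 - (1 + lam ^ 2) * r' s * κ s ^ 2) * hg2' +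
      ((1 + lam ^ 2) * τ s ^ 2) * eq1
  have key : g⁻¹ • V' + i' • (T s + lam • N s + (((1 + lam ^ 2) * (κ s / τ s)) • B s)) =
      (g⁻¹ * (lam * (-(κ s))) + i') • T s
      + (g⁻¹ * (κ s + ((1 + lam ^ 2) * (κ s / τ s)) * (-(τ s))) + i' * lam) • N s
      + (g⁻¹ * (lam * τ s + (1 + lam ^ 2) * f') + i' * ((1 + lam ^ 2) * (κ s / τ s))) • B s := by
    rw [hV']; module
  rw [← hgdef, key, cT0, cN0, cB0]
  simp
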